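/- Let ν ≥ 1/2 and define a_n = Γ(ν+1) Γ(n/2) / (√π · (n−1)! · Γ((n+1)/2 + ν)) for n ≥ 2, with a_1 = 1. Then for all n ≥ 1, a_n / a_{n+1} ≥ n + 1. -/

import Mathlib

open Real

lemma gamma_ratio_mono {s t : ℝ} (hs : 0 < s) (hst : s ≤ t) :
    Real.Gamma (s + 1/2) * Real.Gamma t ≤ Real.Gamma s * Real.Gamma (t + 1/2) := by
  have ht : 0 < t := hs.trans_le hst
  rcases eq_or_lt_of_le hst with rfl | hlt
  · exact (mul_comm _ _).le
  · have hd : (0:ℝ) < t + 1/2 - s := by linarith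
    set lam : ℝ := (1/2) / (t + 1/2 - s) with hlam
    have hlam0 : 0 ≤ lam := by positivity
    have hlam1 : lam ≤ 1 := by
      rw [hlam, div_le_one hd]; linarith
    have c := Real.convexOn_log_Gamma
    have hsmem : s ∈ Set.Ioi (0:ℝ) := hs
    have htmem : (t + 1/2) ∈ Set.Ioi (0:ℝ) := by simp; linarith
    have h1 := c.2 hsmem htmem (by linarith : (0:ℝ) ≤ 1 - lam) hlam0 (by ring)
    have h2 := c.2 hsmem htmem hlam0 (by linarith : (0:ℝ) ≤ 1 - lam) (by ring)
    have hmul : lam * (t + 1/2 - s) = 1/2 := div_mul_cancel₀ _ hd.ne'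
    have e1 : (1 - lam) • s + lam • (t + 1/2) = s + 1/2 := by
      rw [smul_eq_mul, smul_eq_mul]; linear_combination hmul
    have e2 : lam • s + (1 - lam) • (t + 1/2) = t := by
      rw [smul_eq_mul, smul_eq_mul]; linear_combination -hmul
    rw [e1] at h1
    rw [e2] at h2
    simp only [Function.comp_apply, smul_eq_mul] at h1 h2
    have hlog : Real.log (Real.Gamma (s + 1/2)) + Real.log (Real.Gamma t) ≤
        Real.log (Real.Gamma s) + Real.log (Real.Gamma (t + 1/2)) := by linarith
    have g1 : 0 < Real.Gamma (s + 1/2) := Real.Gamma_pos_of_pos (by linarith)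
    have g2 : 0 < Real.Gamma t := Real.Gamma_pos_of_pos ht
    have g3 : 0 < Real.Gamma s := Real.Gamma_pos_of_pos hs
    have g4 : 0 < Real.Gamma (t + 1/2) := Real.Gamma_pos_of_pos (by linarith)
    have := Real.exp_le_exp.2 hlog
    rwa [Real.exp_add, Real.exp_add, Real.exp_log g1, Real.exp_log g2,
      Real.exp_log g3, Real.exp_log g4] at this

theorem coeff_ratio_ge (ν : ℝ) (hν : 1/2 ≤ ν) (a : ℕ → ℝ) (ha1 : a 1 = 1)
    (ha : ∀ n : ℕ, 2 ≤ n → a n = Real.Gamma (ν + 1) * Real.Gamma ((n : ℝ) / 2) /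
      (Real.sqrt Real.pi * ((n - 1).factorial : ℝ) * Real.Gamma (((n : ℝ) + 1) / 2 + ν))) :
    ∀ n : ℕ, 1 ≤ n → a n / a (n + 1) ≥ (n : ℝ) + 1 := by
  have hA : 0 < Real.Gamma (ν + 1) := Real.Gamma_pos_of_pos (by linarith)
  have hP : 0 < Real.sqrt Real.pi := Real.sqrt_pos.2 Real.pi_pos
  have ha' : ∀ m : ℕ, 1 ≤ m → a m = Real.Gamma (ν + 1) * Real.Gamma ((m : ℝ) / 2) /
      (Real.sqrt Real.pi * ((m - 1).factorial : ℝ) * Real.Gamma (((m : ℝ) + 1) / 2 + ν)) := by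
    intro m hm
    rcases eq_or_lt_of_le hm with rfl | hm2
    · rw [ha1]
      norm_num
      rw [Real.Gamma_one_half_eq, add_comm (1:ℝ) ν]
      field_simp
    · exact ha m hm2
  intro n hn
  have hnpos : (0:ℝ) < n := by exact_mod_cast hn
  set x : ℝ := (n:ℝ) / 2 with hx
  have hxpos : 0 < x := by positivity
  have han : a n = Real.Gamma (ν + 1) * Real.Gamma x /
      (Real.sqrt Real.pi * ((n - 1).factorial : ℝ) * Real.Gamma (x + 1/2 + ν)) := by
    rw [ha' n hn, hx]; ring_nf
  have han1 : a (n + 1) = Real.Gamma (ν + 1) * Real.Gamma (x + 1/2) /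
      (Real.sqrt Real.pi * (n.factorial : ℝ) * Real.Gamma (x + 1 + ν)) := by
    rw [ha' (n+1) (by omega), hx]
    push_cast
    norm_num
    ring_nf
  -- positivity facts
  have g1 : 0 < Real.Gamma x := Real.Gamma_pos_of_pos hxpos
  have g2 : 0 < Real.Gamma (x + 1/2) := Real.Gamma_pos_of_pos (by linarith)
  have g3 : 0 < Real.Gamma (x + 1/2 + ν) := Real.Gamma_pos_of_pos (by linarith)
  have g4 : 0 < Real.Gamma (x + 1 + ν) := Real.Gamma_pos_of_pos (by linarith)
  have hf1 : (0:ℝ) < ((n - 1).factorial : ℝ) := by positivity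
  have hf2 : (0:ℝ) < (n.factorial : ℝ) := by positivity
  -- key inequality: apply gamma_ratio_mono with s = x+1, t = x+ν+1/2
  have key := gamma_ratio_mono (s := x + 1) (t := x + ν + 1/2) (by linarith) (by linarith)
  -- rewrite: Γ(x+1+1/2) = (x+1/2)Γ(x+1/2), Γ(x+1) = xΓ(x), Γ(x+ν+1/2+1/2) = Γ(x+1+ν)
  have e1 : Real.Gamma (x + 1 + 1/2) = (x + 1/2) * Real.Gamma (x + 1/2) := by
    rw [show x + 1 + 1/2 = (x + 1/2) + 1 by ring, Real.Gamma_add_one (by linarith)]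
  have e2 : Real.Gamma (x + 1) = x * Real.Gamma x := Real.Gamma_add_one hxpos.ne'
  have e3 : Real.Gamma (x + ν + 1/2 + 1/2) = Real.Gamma (x + 1 + ν) := by ring_nf
  have e4 : Real.Gamma (x + ν + 1/2) = Real.Gamma (x + 1/2 + ν) := by ring_nf
  rw [e1, e2, e3, e4] at key
  -- key : (x+1/2) * Γ(x+1/2) * Γ(x+1/2+ν) ≤ x * Γ x * Γ(x+1+ν)
  have hfact : (n.factorial : ℝ) = n * ((n - 1).factorial : ℝ) := by
    obtain ⟨k, rfl⟩ : ∃ k, n = k + 1 := ⟨n - 1, by omega⟩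
    simp [Nat.factorial_succ]
  have hn2 : (n:ℝ) = 2 * x := by rw [hx]; ring
  have hden : 0 < a (n + 1) := by
    rw [han1]; positivity
  rw [ge_iff_le, le_div_iff₀ hden, han, han1, hfact, hn2]
  rw [← mul_div_assoc, div_le_div_iff₀ (by positivity) (by positivity)]
  nlinarith [mul_le_mul_of_nonneg_left key
    (show (0:ℝ) ≤ 2 * Real.Gamma (ν + 1) * Real.sqrt Real.pi * ((n - 1).factorial : ℝ) by positivity)]
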